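/- For n ≥ 2, α > 1, and r ≥ 1, the function f(r) = (1+(n-1)r^{1-α})/(1+(n-1)r^{-α}) attains its maximum over r ≥ 1 at the unique root x* of B(x) = α + x(1-α) + (n-1)x^{1-α} = 0 with x* > 1, and the maximum value equals 1 + T(x*)/α where T(r) = (n-1)r^{1-α}. -/

import Mathlib

open Real Set

private lemma aux_Bderiv {α m x : ℝ} (hx : 0 < x) :
    HasDerivAt (fun x : ℝ => α + x * (1 - α) + m * x ^ (1 - α))
      ((1 - α) * (1 + m * x ^ (-α))) x := by
  have h2 : HasDerivAt (fun x : ℝ => x ^ (1 - α)) ((1 - α) * x ^ (-α)) x := by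
    have := Real.hasDerivAt_rpow_const (x := x) (p := 1 - α) (Or.inl hx.ne')
    rwa [show (1 - α) - 1 = -α by ring] at this
  have := ((hasDerivAt_const x α).add ((hasDerivAt_id x).mul_const (1 - α))).add
    (h2.const_mul m)
  refine this.congr_deriv ?_
  ring

private lemma aux_fderiv {α m x : ℝ} (hα : 1 < α) (hm : 0 < m) (hx : 0 < x) :
    HasDerivAt (fun r : ℝ => (1 + m * r ^ (1 - α)) / (1 + m * r ^ (-α)))
      (m * x ^ (-α - 1) * (α + x * (1 - α) + m * x ^ (1 - α)) / (1 + m * x ^ (-α)) ^ 2) x := by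
  have hD : (0:ℝ) < 1 + m * x ^ (-α) := by
    have := Real.rpow_pos_of_pos hx (-α); nlinarith
  have h2 : HasDerivAt (fun x : ℝ => x ^ (1 - α)) ((1 - α) * x ^ (-α)) x := by
    have := Real.hasDerivAt_rpow_const (x := x) (p := 1 - α) (Or.inl hx.ne')
    rwa [show (1 - α) - 1 = -α by ring] at this
  have h3 : HasDerivAt (fun x : ℝ => x ^ (-α)) (-α * x ^ (-α - 1)) x :=
    Real.hasDerivAt_rpow_const (x := x) (p := -α) (Or.inl hx.ne')
  have hN : HasDerivAt (fun r : ℝ => 1 + m * r ^ (1 - α)) (m * ((1 - α) * x ^ (-α))) x := by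
    simpa using h2.const_mul m
  have hDd : HasDerivAt (fun r : ℝ => 1 + m * r ^ (-α)) (m * (-α * x ^ (-α - 1))) x := by
    simpa using h3.const_mul m
  have := hN.div hDd hD.ne'
  refine this.congr_deriv ?_
  have e1 : x ^ (1 - α) = x * x ^ (-α) := by
    rw [show (1 - α) = 1 + -α by ring, Real.rpow_add hx, Real.rpow_one]
  have e2 : x ^ (-α - 1) = x ^ (-α) / x := by
    rw [show (-α - 1) = -α + -1 by ring, Real.rpow_add hx, Real.rpow_neg_one]
    ring
  rw [e1, e2]
  field_simp
  ring

theorem worst_case_r_characterization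
    (n : ℕ) (hn : 2 ≤ n) (α : ℝ) (hα : 1 < α)
    (f : ℝ → ℝ)
    (hf : ∀ r : ℝ, f r = (1 + (n - 1 : ℝ) * r ^ (1 - α)) / (1 + (n - 1 : ℝ) * r ^ (-α)))
    (B : ℝ → ℝ)
    (hB : ∀ x : ℝ, B x = α + x * (1 - α) + (n - 1 : ℝ) * x ^ (1 - α))
    (T : ℝ → ℝ)
    (hT : ∀ r : ℝ, T r = (n - 1 : ℝ) * r ^ (1 - α)) :
    ∃ xstar : ℝ, 1 < xstar ∧ B xstar = 0 ∧
      (∀ y : ℝ, 1 < y → B y = 0 → y = xstar) ∧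
      (∀ r : ℝ, 1 ≤ r → f r ≤ f xstar) ∧
      f xstar = 1 + T xstar / α := by
  set m : ℝ := (n : ℝ) - 1 with hmdef
  have hm : (1:ℝ) ≤ m := by
    have : (2:ℝ) ≤ (n:ℝ) := by exact_mod_cast hn
    simp only [hmdef]; linarith
  have hm0 : (0:ℝ) < m := by linarith
  -- the concrete functions
  set g : ℝ → ℝ := fun r => (1 + m * r ^ (1 - α)) / (1 + m * r ^ (-α)) with hgdef
  set Bf : ℝ → ℝ := fun x => α + x * (1 - α) + m * x ^ (1 - α) with hBfdef
  have hfg : ∀ r, f r = g r := hf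
  have hBB : ∀ x, B x = Bf x := hB
  have hDpos : ∀ x : ℝ, 0 < x → (0:ℝ) < 1 + m * x ^ (-α) := by
    intro x hx
    have := Real.rpow_pos_of_pos hx (-α); nlinarith
  -- B is strictly decreasing on [1, ∞)
  have hBcont : ContinuousOn Bf (Ici 1) := by
    intro x hx
    have hx0 : (0:ℝ) < x := lt_of_lt_of_le one_pos hx
    exact (aux_Bderiv (α := α) (m := m) hx0).continuousAt.continuousWithinAt
  have hBanti : StrictAntiOn Bf (Ici 1) := by
    apply strictAntiOn_of_deriv_neg (convex_Ici 1) hBcont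
    intro x hx
    rw [interior_Ici] at hx
    have hx0 : (0:ℝ) < x := lt_trans one_pos hx
    rw [(aux_Bderiv (α := α) (m := m) hx0).deriv]
    have := hDpos x hx0
    nlinarith
  have hB1 : Bf 1 = 1 + m := by
    simp only [hBfdef, Real.one_rpow]; ring
  -- a point where Bf is negative
  set M : ℝ := (α + m) / (α - 1) + 1 with hMdef
  have hM1 : (1:ℝ) < M := by
    have : (0:ℝ) < (α + m) / (α - 1) := div_pos (by linarith) (by linarith)
    simp only [hMdef]; linarith
  have hBM : Bf M < 0 := by
    have h1 : M ^ (1 - α) ≤ 1 :=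
      Real.rpow_le_one_of_one_le_of_nonpos hM1.le (by linarith)
    have h2 : M * (1 - α) = -(α + m) - (α - 1) := by
      have hne : α - 1 ≠ 0 := by linarith
      rw [hMdef]
      field_simp
      ring
    simp only [hBfdef]
    nlinarith
  -- existence of the root
  obtain ⟨xstar, hxmem, hBx0⟩ :=
    intermediate_value_Icc' hM1.le (hBcont.mono (Icc_subset_Ici_self))
      (show (0:ℝ) ∈ Icc (Bf M) (Bf 1) from ⟨hBM.le, by rw [hB1]; linarith⟩)
  have hx1 : 1 < xstar := by
    rcases lt_or_eq_of_le hxmem.1 with h | h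
    · exact h
    · exfalso; rw [← h] at hBx0; rw [hB1] at hBx0; linarith
  have hxpos : (0:ℝ) < xstar := lt_trans one_pos hx1
  -- monotonicity of g
  have hgcont : ∀ x : ℝ, 0 < x → ContinuousAt g x := fun x hx =>
    (aux_fderiv hα hm0 hx).continuousAt
  have hgd : ∀ x : ℝ, 0 < x → deriv g x =
      m * x ^ (-α - 1) * Bf x / (1 + m * x ^ (-α)) ^ 2 := fun x hx =>
    (aux_fderiv hα hm0 hx).deriv
  have hmono : MonotoneOn g (Icc 1 xstar) := by
    apply monotoneOn_of_deriv_nonneg (convex_Icc 1 xstar)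
    · intro x hx
      exact (hgcont x (lt_of_lt_of_le one_pos hx.1)).continuousWithinAt
    · intro x hx
      rw [interior_Icc] at hx
      exact ((aux_fderiv hα hm0 (lt_trans one_pos hx.1)).differentiableAt).differentiableWithinAt
    · intro x hx
      rw [interior_Icc] at hx
      have hx0 : (0:ℝ) < x := lt_trans one_pos hx.1
      rw [hgd x hx0]
      have hBpos : 0 < Bf x := by
        have := hBanti (mem_Ici.mpr hx.1.le) (mem_Ici.mpr (le_trans hx.1.le hx.2.le)) hx.2
        rw [hBx0] at this
        exact this
      have h1 : (0:ℝ) < x ^ (-α - 1) := Real.rpow_pos_of_pos hx0 _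
      have h2 : (0:ℝ) < (1 + m * x ^ (-α)) ^ 2 := by
        have := hDpos x hx0; positivity
      positivity
  have hanti : AntitoneOn g (Ici xstar) := by
    apply antitoneOn_of_deriv_nonpos (convex_Ici xstar)
    · intro x hx
      exact (hgcont x (lt_of_lt_of_le hxpos hx)).continuousWithinAt
    · intro x hx
      rw [interior_Ici] at hx
      exact ((aux_fderiv hα hm0 (lt_trans hxpos hx)).differentiableAt).differentiableWithinAt
    · intro x hx
      rw [interior_Ici] at hx
      have hx0' : (0:ℝ) < x := lt_trans hxpos hx
      rw [hgd x hx0']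
      have hBneg : Bf x < 0 := by
        have := hBanti (mem_Ici.mpr hx1.le) (mem_Ici.mpr (le_trans hx1.le hx.le)) hx
        rw [hBx0] at this
        exact this
      have h1 : (0:ℝ) < x ^ (-α - 1) := Real.rpow_pos_of_pos hx0' _
      have h2 : (0:ℝ) < (1 + m * x ^ (-α)) ^ 2 := by
        have := hDpos x hx0'; positivity
      have : m * x ^ (-α - 1) * Bf x < 0 :=
        mul_neg_of_pos_of_neg (mul_pos hm0 h1) hBneg
      exact le_of_lt (div_neg_of_neg_of_pos this h2)
  refine ⟨xstar, hx1, by rw [hBB]; exact hBx0, ?_, ?_, ?_⟩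
  · intro y hy hBy
    rw [hBB] at hBy
    exact hBanti.injOn (mem_Ici.mpr hy.le) (mem_Ici.mpr hx1.le) (by rw [hBy, hBx0])
  · intro r hr
    rw [hfg, hfg]
    rcases le_total r xstar with h | h
    · exact hmono ⟨hr, h⟩ ⟨hr.trans h, le_refl _⟩ h
    · exact hanti (self_mem_Ici) (mem_Ici.mpr h) h
  · rw [hfg, hT]
    have e1 : xstar ^ (-α) = xstar ^ (1 - α) / xstar := by
      rw [show (1 - α) = -α + 1 by ring, Real.rpow_add hxpos, Real.rpow_one]
      field_simp
    have hu : m * xstar ^ (1 - α) = α * xstar - α - xstar := by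
      have : Bf xstar = 0 := hBx0
      simp only [hBfdef] at this
      linarith
    simp only [hgdef, hmdef] at *
    rw [e1, ← mul_div_assoc, hu]
    have hden : 1 + (α * xstar - α - xstar) / xstar = α * (xstar - 1) / xstar := by
      field_simp; ring
    rw [hden, div_eq_iff]
    · field_simp
      ring
    · have h1 : 0 < xstar - 1 := by linarith
      have h2 : 0 < α := by linarith
      positivity
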